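/- If c is an edge-colouring of the complete graph K_n with no monochromatic K_m (m ≥ 3) and no rainbow K_4, and A, B are disjoint vertex sets each of size at most k, then the number of colours used only on edges between A and B is at most k^(3/2)·√m. -/

import Mathlib

/-- No monochromatic complete subgraph on `m` vertices. -/
def NoMonoClique (n m : ℕ) (c : Sym2 (Fin n) → ℕ) : Prop :=
  ¬ ∃ S : Finset (Fin n), S.card = m ∧
      ∃ col, ∀ x ∈ S, ∀ y ∈ S, x ≠ y → c s(x, y) = col

/-- No rainbow complete subgraph on 4 vertices: in every 4-set, some two
distinct edges share a colour. -/
def NoRainbowK4 (n : ℕ) (c : Sym2 (Fin n) → ℕ) : Prop :=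
  ¬ ∃ S : Finset (Fin n), S.card = 4 ∧
      ∀ x ∈ S, ∀ y ∈ S, ∀ z ∈ S, ∀ w ∈ S,
        x ≠ y → z ≠ w → s(x, y) ≠ s(z, w) → c s(x, y) ≠ c s(z, w)

/-- `e` is an edge joining `A` to `B`. -/
def Crosses {n : ℕ} (A B : Finset (Fin n)) (e : Sym2 (Fin n)) : Prop :=
  ∃ a ∈ A, ∃ b ∈ B, e = s(a, b)

open Classical in
/-- The set of colours used by `c`, but only on edges joining `A` to `B`. -/
noncomputable def crossOnlyColours (n : ℕ) (c : Sym2 (Fin n) → ℕ)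
    (A B : Finset (Fin n)) : Finset ℕ :=
  ((Finset.univ.filter (fun e : Sym2 (Fin n) => ¬ e.IsDiag ∧ Crosses A B e)).image c) \
    ((Finset.univ.filter (fun e : Sym2 (Fin n) => ¬ e.IsDiag ∧ ¬ Crosses A B e)).image c)

set_option maxHeartbeats 1000000 in
theorem across_bound (n m k : ℕ) (hm : 3 ≤ m) (c : Sym2 (Fin n) → ℕ)
    (hmono : NoMonoClique n m c) (hrain : NoRainbowK4 n c)
    (A B : Finset (Fin n)) (hAB : Disjoint A B)
    (hA : A.card ≤ k) (hB : B.card ≤ k) :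
    ((crossOnlyColours n c A B).card : ℝ) ≤ (k : ℝ) ^ ((3 : ℝ) / 2) * Real.sqrt m := by
  classical
  set C : Finset ℕ := crossOnlyColours n c A B with hCdef
  -- colours in C are not used on non-crossing edges
  have hnc : ∀ γ ∈ C, ∀ e : Sym2 (Fin n), ¬ e.IsDiag → ¬ Crosses A B e → c e ≠ γ := by
    intro γ hγ e hd hcr hce
    rw [hCdef, crossOnlyColours, Finset.mem_sdiff] at hγ
    exact hγ.2 (Finset.mem_image.mpr ⟨e, Finset.mem_filter.mpr ⟨Finset.mem_univ _, hd, hcr⟩, hce⟩)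
  have hex : ∀ γ ∈ C, ∃ p : Fin n × Fin n, p.1 ∈ A ∧ p.2 ∈ B ∧ c s(p.1, p.2) = γ := by
    intro γ hγ
    rw [hCdef, crossOnlyColours, Finset.mem_sdiff] at hγ
    obtain ⟨e, he, hce⟩ := Finset.mem_image.mp hγ.1
    obtain ⟨-, -, hcr⟩ := Finset.mem_filter.mp he
    obtain ⟨a, ha, b, hb, rfl⟩ := hcr
    exact ⟨(a, b), ha, hb, hce⟩
  set E : Finset (Fin n × Fin n) := C.attach.image (fun γ => (hex γ.1 γ.2).choose) with hEdef
  have hmemE : ∀ p ∈ E, p.1 ∈ A ∧ p.2 ∈ B ∧ c s(p.1, p.2) ∈ C := by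
    intro p hp
    obtain ⟨γ, -, rfl⟩ := Finset.mem_image.mp hp
    obtain ⟨h1, h2, h3⟩ := (hex γ.1 γ.2).choose_spec
    exact ⟨h1, h2, by rw [h3]; exact γ.2⟩
  have hinj : ∀ p ∈ E, ∀ q ∈ E, c s(p.1, p.2) = c s(q.1, q.2) → p = q := by
    intro p hp q hq hpq
    obtain ⟨γ, -, rfl⟩ := Finset.mem_image.mp hp
    obtain ⟨δ, -, rfl⟩ := Finset.mem_image.mp hq
    have h1 := (hex γ.1 γ.2).choose_spec.2.2
    have h2 := (hex δ.1 δ.2).choose_spec.2.2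
    have hgd : γ = δ := Subtype.ext (by rw [← h1, ← h2, hpq])
    rw [hgd]
  have htE : C.card ≤ E.card := by
    have hsub : C ⊆ E.image (fun p => c s(p.1, p.2)) := by
      intro γ hγ
      refine Finset.mem_image.mpr ⟨(hex γ hγ).choose, ?_, (hex γ hγ).choose_spec.2.2⟩
      exact Finset.mem_image.mpr ⟨⟨γ, hγ⟩, Finset.mem_attach _ _, rfl⟩
    exact le_trans (Finset.card_le_card hsub) Finset.card_image_le
  clear hEdef
  clear_value E
  -- internal edges don't have colours in C
  have hintA : ∀ a ∈ A, ∀ a' ∈ A, a ≠ a' → c s(a, a') ∉ C := by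
    intro a ha a' ha' hne hmem
    refine hnc _ hmem s(a, a') (by simpa using hne) ?_ rfl
    rintro ⟨x, hx, y, hy, hxy⟩
    rw [Sym2.eq_iff] at hxy
    rcases hxy with ⟨rfl, rfl⟩ | ⟨rfl, rfl⟩
    · exact Finset.disjoint_left.mp hAB ha' hy
    · exact Finset.disjoint_left.mp hAB ha hy
  have hintB : ∀ b ∈ B, ∀ b' ∈ B, b ≠ b' → c s(b, b') ∉ C := by
    intro b hb b' hb' hne hmem
    refine hnc _ hmem s(b, b') (by simpa using hne) ?_ rfl
    rintro ⟨x, hx, y, hy, hxy⟩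
    rw [Sym2.eq_iff] at hxy
    rcases hxy with ⟨rfl, rfl⟩ | ⟨rfl, rfl⟩
    · exact Finset.disjoint_left.mp hAB hx hb
    · exact Finset.disjoint_left.mp hAB hx hb'
  -- K4 lemma
  have hK4 : ∀ a ∈ A, ∀ a' ∈ A, ∀ b ∈ B, ∀ b' ∈ B, a ≠ a' → b ≠ b' →
      (a, b) ∈ E → (a, b') ∈ E → (a', b) ∈ E → (a', b') ∈ E →
      c s(a, a') = c s(b, b') := by
    intro a ha a' ha' b hb b' hb' haa hbb h1 h2 h3 h4
    have hab : a ≠ b := fun h => Finset.disjoint_left.mp hAB ha (h ▸ hb)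
    have hab' : a ≠ b' := fun h => Finset.disjoint_left.mp hAB ha (h ▸ hb')
    have ha'b : a' ≠ b := fun h => Finset.disjoint_left.mp hAB ha' (h ▸ hb)
    have ha'b' : a' ≠ b' := fun h => Finset.disjoint_left.mp hAB ha' (h ▸ hb')
    set S : Finset (Fin n) := {a, a', b, b'} with hSdef
    have hScard : S.card = 4 := by
      have n1 : a ∉ ({a', b, b'} : Finset (Fin n)) := by simp [haa, hab, hab']
      have n2 : a' ∉ ({b, b'} : Finset (Fin n)) := by simp [ha'b, ha'b']
      have n3 : b ∉ ({b'} : Finset (Fin n)) := by simp [hbb]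
      rw [hSdef, Finset.card_insert_of_notMem n1, Finset.card_insert_of_notMem n2,
        Finset.card_insert_of_notMem n3, Finset.card_singleton]
    unfold NoRainbowK4 at hrain
    push_neg at hrain
    obtain ⟨x, hx, y, hy, z, hz, w, hw, hxy, hzw, hes, hcc⟩ := hrain S hScard
    have hmemS : ∀ u, u ∈ S → u = a ∨ u = a' ∨ u = b ∨ u = b' := by
      intro u hu
      simpa [hSdef, Finset.mem_insert, Finset.mem_singleton] using hu
    have hedge : ∀ u, u = a ∨ u = a' ∨ u = b ∨ u = b' →
        ∀ v, v = a ∨ v = a' ∨ v = b ∨ v = b' → u ≠ v →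
        s(u, v) = s(a, a') ∨ s(u, v) = s(b, b') ∨ s(u, v) = s(a, b) ∨ s(u, v) = s(a, b')
          ∨ s(u, v) = s(a', b) ∨ s(u, v) = s(a', b') := by
      rintro u (rfl | rfl | rfl | rfl) v (rfl | rfl | rfl | rfl) huv <;>
        first
          | exact absurd rfl huv
          | exact Or.inl rfl
          | exact Or.inl Sym2.eq_swap
          | exact Or.inr (Or.inl rfl)
          | exact Or.inr (Or.inl Sym2.eq_swap)
          | exact Or.inr (Or.inr (Or.inl rfl))
          | exact Or.inr (Or.inr (Or.inl Sym2.eq_swap))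
          | exact Or.inr (Or.inr (Or.inr (Or.inl rfl)))
          | exact Or.inr (Or.inr (Or.inr (Or.inl Sym2.eq_swap)))
          | exact Or.inr (Or.inr (Or.inr (Or.inr (Or.inl rfl))))
          | exact Or.inr (Or.inr (Or.inr (Or.inr (Or.inl Sym2.eq_swap))))
          | exact Or.inr (Or.inr (Or.inr (Or.inr (Or.inr rfl))))
          | exact Or.inr (Or.inr (Or.inr (Or.inr (Or.inr Sym2.eq_swap))))
    have hC1 : c s(a, b) ∈ C := (hmemE _ h1).2.2
    have hC2 : c s(a, b') ∈ C := (hmemE _ h2).2.2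
    have hC3 : c s(a', b) ∈ C := (hmemE _ h3).2.2
    have hC4 : c s(a', b') ∈ C := (hmemE _ h4).2.2
    have hN1 : c s(a, a') ∉ C := hintA a ha a' ha' haa
    have hN2 : c s(b, b') ∉ C := hintB b hb b' hb' hbb
    have hd12 : c s(a, b) ≠ c s(a, b') := fun h => hbb (congrArg Prod.snd (hinj _ h1 _ h2 h))
    have hd13 : c s(a, b) ≠ c s(a', b) := fun h => haa (congrArg Prod.fst (hinj _ h1 _ h3 h))
    have hd14 : c s(a, b) ≠ c s(a', b') := fun h => haa (congrArg Prod.fst (hinj _ h1 _ h4 h))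
    have hd23 : c s(a, b') ≠ c s(a', b) := fun h => haa (congrArg Prod.fst (hinj _ h2 _ h3 h))
    have hd24 : c s(a, b') ≠ c s(a', b') := fun h => haa (congrArg Prod.fst (hinj _ h2 _ h4 h))
    have hd34 : c s(a', b) ≠ c s(a', b') := fun h => hbb (congrArg Prod.snd (hinj _ h3 _ h4 h))
    rcases hedge x (hmemS x hx) y (hmemS y hy) hxy with e1 | e1 | e1 | e1 | e1 | e1 <;>
      rcases hedge z (hmemS z hz) w (hmemS w hw) hzw with e2 | e2 | e2 | e2 | e2 | e2 <;>
      rw [e1, e2] at hes hcc <;>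
      first
        | exact hcc
        | exact hcc.symm
        | exact absurd rfl hes
        | exact (hd12 hcc).elim
        | exact (hd12 hcc.symm).elim
        | exact (hd13 hcc).elim
        | exact (hd13 hcc.symm).elim
        | exact (hd14 hcc).elim
        | exact (hd14 hcc.symm).elim
        | exact (hd23 hcc).elim
        | exact (hd23 hcc.symm).elim
        | exact (hd24 hcc).elim
        | exact (hd24 hcc.symm).elim
        | exact (hd34 hcc).elim
        | exact (hd34 hcc.symm).elim
        | exact (hN1 (hcc ▸ hC1)).elim
        | exact (hN1 (hcc ▸ hC2)).elim
        | exact (hN1 (hcc ▸ hC3)).elim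
        | exact (hN1 (hcc ▸ hC4)).elim
        | exact (hN2 (hcc ▸ hC1)).elim
        | exact (hN2 (hcc ▸ hC2)).elim
        | exact (hN2 (hcc ▸ hC3)).elim
        | exact (hN2 (hcc ▸ hC4)).elim
        | exact (hN1 (hcc.symm ▸ hC1)).elim
        | exact (hN1 (hcc.symm ▸ hC2)).elim
        | exact (hN1 (hcc.symm ▸ hC3)).elim
        | exact (hN1 (hcc.symm ▸ hC4)).elim
        | exact (hN2 (hcc.symm ▸ hC1)).elim
        | exact (hN2 (hcc.symm ▸ hC2)).elim
        | exact (hN2 (hcc.symm ▸ hC3)).elim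
        | exact (hN2 (hcc.symm ▸ hC4)).elim
  -- common neighbourhood bound
  have hT : ∀ b ∈ B, ∀ b' ∈ B, b ≠ b' →
      (A.filter (fun a => (a, b) ∈ E ∧ (a, b') ∈ E)).card ≤ m - 1 := by
    intro b hb b' hb' hbb
    by_contra hcon
    push_neg at hcon
    have hm' : m ≤ (A.filter (fun a => (a, b) ∈ E ∧ (a, b') ∈ E)).card := by omega
    obtain ⟨S₁, hS₁sub, hS₁card⟩ := Finset.exists_subset_card_eq hm'
    refine hmono ⟨S₁, hS₁card, c s(b, b'), ?_⟩
    intro x hx y hy hxy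
    have hx' := Finset.mem_filter.mp (hS₁sub hx)
    have hy' := Finset.mem_filter.mp (hS₁sub hy)
    exact hK4 x hx'.1 y hy'.1 b hb b' hb' hxy hbb hx'.2.1 hx'.2.2 hy'.2.1 hy'.2.2
  -- counting
  set Q : Finset ((Fin n × Fin n) × (Fin n × Fin n)) :=
    (E ×ˢ E).filter (fun pq => pq.1.1 = pq.2.1) with hQdef
  have hQmem : ∀ pq ∈ Q, pq.1 ∈ E ∧ pq.2 ∈ E ∧ pq.1.1 = pq.2.1 := by
    intro pq hpq
    have h := Finset.mem_filter.mp hpq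
    have h' := Finset.mem_product.mp h.1
    exact ⟨h'.1, h'.2, h.2⟩
  have hQsum : Q.card = ∑ a ∈ A, ((E.filter (fun p => p.1 = a)).card) ^ 2 := by
    rw [Finset.card_eq_sum_card_fiberwise
      (f := fun pq => pq.1.1) (t := A)
      (fun pq hpq => (hmemE pq.1 (hQmem pq hpq).1).1)]
    refine Finset.sum_congr rfl fun a _ => ?_
    have hfib : Q.filter (fun pq => pq.1.1 = a)
        = (E.filter (fun p => p.1 = a)) ×ˢ (E.filter (fun p => p.1 = a)) := by
      ext pq
      simp only [hQdef, Finset.mem_filter, Finset.mem_product]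
      constructor
      · rintro ⟨⟨⟨hp, hq⟩, h12⟩, h1a⟩
        exact ⟨⟨hp, h1a⟩, hq, by rw [← h12, h1a]⟩
      · rintro ⟨⟨hp, h1a⟩, hq, h2a⟩
        exact ⟨⟨⟨hp, hq⟩, by rw [h1a, h2a]⟩, h1a⟩
    rw [hfib, Finset.card_product, sq]
  have hsumE : E.card = ∑ a ∈ A, (E.filter (fun p => p.1 = a)).card :=
    Finset.card_eq_sum_card_fiberwise (fun p hp => (hmemE p hp).1)
  have hCS : E.card ^ 2 ≤ A.card * Q.card := by
    rw [hsumE, hQsum]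
    exact sq_sum_le_card_mul_sum_sq
  -- split Q
  have hsplit : (Q.filter (fun pq => pq.1.2 = pq.2.2)).card
      + (Q.filter (fun pq => ¬ pq.1.2 = pq.2.2)).card = Q.card :=
    Finset.card_filter_add_card_filter_not _
  have hQd : (Q.filter (fun pq => pq.1.2 = pq.2.2)).card ≤ E.card := by
    refine Finset.card_le_card_of_injOn (fun pq => pq.1) ?_ ?_
    · intro pq hpq
      exact (hQmem pq (Finset.mem_filter.mp hpq).1).1
    · intro pq hpq pq' hpq' h
      simp only [Finset.coe_filter, Set.mem_setOf_eq] at hpq hpq'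
      have h' : pq.1 = pq'.1 := h
      have e1 : pq.2 = pq.1 := Prod.ext (hQmem pq hpq.1).2.2.symm hpq.2.symm
      have e2 : pq'.2 = pq'.1 := Prod.ext (hQmem pq' hpq'.1).2.2.symm hpq'.2.symm
      exact Prod.ext h' (by rw [e1, e2, h'])
  have hQo : (Q.filter (fun pq => ¬ pq.1.2 = pq.2.2)).card ≤ (m - 1) * (B.card * B.card) := by
    have := Finset.card_le_mul_card_image_of_maps_to
      (f := fun pq : (Fin n × Fin n) × (Fin n × Fin n) => (pq.1.2, pq.2.2))
      (s := Q.filter (fun pq => ¬ pq.1.2 = pq.2.2)) (t := B ×ˢ B)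
      (fun pq hpq => by
        have h := hQmem pq (Finset.mem_filter.mp hpq).1
        exact Finset.mem_product.mpr ⟨(hmemE pq.1 h.1).2.1, (hmemE pq.2 h.2.1).2.1⟩)
      (m - 1)
      (fun bb hbb => by
        obtain ⟨hbB, hbB'⟩ := Finset.mem_product.mp hbb
        show (Finset.filter (fun pq : (Fin n × Fin n) × (Fin n × Fin n) => (pq.1.2, pq.2.2) = bb)
          (Finset.filter (fun pq => ¬pq.1.2 = pq.2.2) Q)).card ≤ m - 1
        rcases Finset.eq_empty_or_nonempty
          (Finset.filter (fun pq : (Fin n × Fin n) × (Fin n × Fin n) => (pq.1.2, pq.2.2) = bb)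
            (Finset.filter (fun pq => ¬pq.1.2 = pq.2.2) Q)) with hE0 | hne0
        · rw [hE0, Finset.card_empty]; exact Nat.zero_le _
        · obtain ⟨pq₀, hpq₀⟩ := hne0
          have h₀ := Finset.mem_filter.mp hpq₀
          have h₀' := Finset.mem_filter.mp h₀.1
          have hne : bb.1 ≠ bb.2 := by
            have hf : pq₀.1.2 = bb.1 := (Prod.ext_iff.mp h₀.2).1
            have hs : pq₀.2.2 = bb.2 := (Prod.ext_iff.mp h₀.2).2
            rw [← hf, ← hs]; exact h₀'.2
          refine le_trans (Finset.card_le_card_of_injOn (fun pq => pq.1.1) ?_ ?_)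
            (hT bb.1 hbB bb.2 hbB' hne)
          · intro pq hpq
            have h0 := Finset.mem_filter.mp hpq
            have hq := hQmem pq (Finset.mem_filter.mp h0.1).1
            have hfst : pq.1.2 = bb.1 := (Prod.ext_iff.mp h0.2).1
            have hsnd : pq.2.2 = bb.2 := (Prod.ext_iff.mp h0.2).2
            refine Finset.mem_filter.mpr ⟨(hmemE pq.1 hq.1).1, ?_, ?_⟩
            · have he : pq.1 = (pq.1.1, bb.1) := Prod.ext rfl hfst
              exact he ▸ hq.1
            · have he : pq.2 = (pq.1.1, bb.2) := Prod.ext hq.2.2.symm hsnd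
              exact he ▸ hq.2.1
          · intro pq hpq pq' hpq' h
            simp only [Finset.coe_filter, Set.mem_setOf_eq] at hpq hpq'
            have h' : pq.1.1 = pq'.1.1 := h
            have hq := hQmem pq (Finset.mem_filter.mp hpq.1).1
            have hq' := hQmem pq' (Finset.mem_filter.mp hpq'.1).1
            have hfst : pq.1.2 = bb.1 := (Prod.ext_iff.mp hpq.2).1
            have hsnd : pq.2.2 = bb.2 := (Prod.ext_iff.mp hpq.2).2
            have hfst' : pq'.1.2 = bb.1 := (Prod.ext_iff.mp hpq'.2).1
            have hsnd' : pq'.2.2 = bb.2 := (Prod.ext_iff.mp hpq'.2).2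
            exact Prod.ext (Prod.ext h' (by rw [hfst, hfst']))
              (Prod.ext (by rw [← hq.2.2, ← hq'.2.2, h']) (by rw [hsnd, hsnd'])))
    refine le_trans this (le_of_eq ?_)
    rw [Finset.card_product]
  have hEk : E.card ≤ k * k := by
    have hsub : E ⊆ A ×ˢ B := fun p hp =>
      Finset.mem_product.mpr ⟨(hmemE p hp).1, (hmemE p hp).2.1⟩
    calc E.card ≤ (A ×ˢ B).card := Finset.card_le_card hsub
      _ = A.card * B.card := Finset.card_product _ _
      _ ≤ k * k := Nat.mul_le_mul hA hB
  have hQtot : Q.card ≤ E.card + (m - 1) * (k * k) := by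
    have hBk : B.card * B.card ≤ k * k := Nat.mul_le_mul hB hB
    have := Nat.mul_le_mul_left (m - 1) hBk
    omega
  have hnat : C.card ^ 2 ≤ m * (k * k * k) := by
    have h1 : E.card ^ 2 ≤ k * (E.card + (m - 1) * (k * k)) :=
      le_trans hCS (Nat.mul_le_mul hA hQtot)
    have h2 : E.card + (m - 1) * (k * k) ≤ m * (k * k) := by
      have hmm : 1 + (m - 1) = m := by omega
      calc E.card + (m - 1) * (k * k) ≤ k * k + (m - 1) * (k * k) := by omega
        _ = (1 + (m - 1)) * (k * k) := by ring
        _ = m * (k * k) := by rw [hmm]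
    have h3 : E.card ^ 2 ≤ m * (k * k * k) := by
      calc E.card ^ 2 ≤ k * (m * (k * k)) := le_trans h1 (Nat.mul_le_mul_left k h2)
        _ = m * (k * k * k) := by ring
    exact le_trans (Nat.pow_le_pow_left htE 2) h3
  -- conclude over the reals
  have hk0 : (0 : ℝ) ≤ (k : ℝ) := Nat.cast_nonneg k
  have hrpow : (k : ℝ) ^ ((3 : ℝ) / 2) = Real.sqrt ((k : ℝ) * (k : ℝ) * (k : ℝ)) := by
    rw [show ((3 : ℝ) / 2) = (3 : ℝ) * (1 / 2) by ring, Real.rpow_mul hk0,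
      ← Real.sqrt_eq_rpow]
    congr 1
    rw [show (3 : ℝ) = ((3 : ℕ) : ℝ) by norm_num, Real.rpow_natCast]
    ring
  have hgoal : (k : ℝ) ^ ((3 : ℝ) / 2) * Real.sqrt m
      = Real.sqrt ((m : ℝ) * ((k : ℝ) * (k : ℝ) * (k : ℝ))) := by
    rw [hrpow, ← Real.sqrt_mul (by positivity), mul_comm]
  rw [hgoal]
  rw [Real.le_sqrt (Nat.cast_nonneg _) (by positivity)]
  exact_mod_cast hnat
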